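/- Let π* : 𝒜 → ℝ be the Gibbs distribution π*(a) = exp((β/α)·Q(a)) / Σ_{a'∈𝒜} exp((β/α)·Q(a')). Then π* uniquely minimizes the preference loss over full-support probability distributions: for every π : 𝒜 → ℝ with π(a) > 0 for all a and Σ_a π(a) = 1, if π ≠ π* then L(π) > L(π*), where L(π) = −(1/|𝒜|²) · Σ_{(a,b)∈𝒜×𝒜} σ(β(Q(a) − Q(b))) · log σ(α(log π(a) − log π(b))). -/

import Mathlib

open Finset

/-- The logistic (sigmoid) function σ(z) = 1/(1+e^{-z}). -/
noncomputable def sigmoid (z : ℝ) : ℝ := 1 / (1 + Real.exp (-z))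

/-- The (ordered-pair) preference loss
L(π) = −(1/|𝒜|²) · Σ_{(a,b)} σ(β(Q a − Q b)) · log σ(α(log π a − log π b)). -/
noncomputable def prefLoss {A : Type*} [Fintype A] (α β : ℝ) (Q : A → ℝ) (π : A → ℝ) : ℝ :=
  -(1 / ((Fintype.card A : ℝ) ^ 2)) *
    ∑ a : A, ∑ b : A,
      sigmoid (β * (Q a - Q b)) * Real.log (sigmoid (α * (Real.log (π a) - Real.log (π b))))

lemma sigmoid_pos (z : ℝ) : 0 < sigmoid z := by
  unfold sigmoid; positivity

lemma sigmoid_lt_one (z : ℝ) : sigmoid z < 1 := by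
  unfold sigmoid
  rw [div_lt_one (by positivity)]
  linarith [Real.exp_pos (-z)]

lemma sigmoid_neg (z : ℝ) : sigmoid (-z) = 1 - sigmoid z := by
  unfold sigmoid
  rw [neg_neg, Real.exp_neg]
  have h := Real.exp_pos z
  have h2 : Real.exp z ≠ 0 := ne_of_gt h
  field_simp
  ring

lemma sigmoid_inj : Function.Injective sigmoid := by
  intro x y h
  unfold sigmoid at h
  have hx : (0:ℝ) < 1 + Real.exp (-x) := by positivity
  have hy : (0:ℝ) < 1 + Real.exp (-y) := by positivity
  field_simp at h
  have h3 : Real.exp (-x) = Real.exp (-y) := by linarith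
  have h4 := Real.exp_injective h3
  linarith

lemma gibbs_lt {p q : ℝ} (hp0 : 0 < p) (hp1 : p < 1) (hq0 : 0 < q) (hq1 : q < 1)
    (hne : q ≠ p) :
    p * Real.log q + (1 - p) * Real.log (1 - q) <
      p * Real.log p + (1 - p) * Real.log (1 - p) := by
  have hp1' : (0:ℝ) < 1 - p := by linarith
  have hq1' : (0:ℝ) < 1 - q := by linarith
  have h1 : Real.log (q / p) < q / p - 1 := by
    apply Real.log_lt_sub_one_of_pos (div_pos hq0 hp0)
    intro h
    apply hne
    field_simp at h
    linarith
  have h2 : Real.log ((1 - q) / (1 - p)) < (1 - q) / (1 - p) - 1 := by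
    apply Real.log_lt_sub_one_of_pos (div_pos hq1' hp1')
    intro h
    apply hne
    field_simp at h
    linarith
  rw [Real.log_div hq0.ne' hp0.ne'] at h1
  rw [Real.log_div hq1'.ne' hp1'.ne'] at h2
  have e1 : p * (q / p - 1) = q - p := by field_simp
  have e2 : (1 - p) * ((1 - q) / (1 - p) - 1) = p - q := by field_simp; ring
  nlinarith [mul_lt_mul_of_pos_left h1 hp0, mul_lt_mul_of_pos_left h2 hp1']

lemma gibbs_le {p q : ℝ} (hp0 : 0 < p) (hp1 : p < 1) (hq0 : 0 < q) (hq1 : q < 1) :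
    p * Real.log q + (1 - p) * Real.log (1 - q) ≤
      p * Real.log p + (1 - p) * Real.log (1 - p) := by
  rcases eq_or_ne q p with rfl | h
  · exact le_refl _
  · exact (gibbs_lt hp0 hp1 hq0 hq1 h).le

/-- the Gibbs distribution π*(a) = exp((β/α)Q(a))/Σ exp((β/α)Q(a'))
uniquely minimizes the preference loss over full-support probability distributions. -/
theorem stmt_0 {A : Type*} [Fintype A] (hA : 2 ≤ Fintype.card A)
    (Q : A → ℝ) (α β : ℝ) (hα : 0 < α) (hβ : 0 < β)
    (πStar : A → ℝ)
    (hπStar : πStar = fun a => Real.exp ((β / α) * Q a) / ∑ a' : A, Real.exp ((β / α) * Q a')) :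
    ∀ π : A → ℝ, (∀ a, 0 < π a) → (∑ a : A, π a = 1) → π ≠ πStar →
      prefLoss α β Q πStar < prefLoss α β Q π := by
  intro π hpos hsum hne
  have hcard : 0 < Fintype.card A := by omega
  have hne0 : Nonempty A := Fintype.card_pos_iff.mp hcard
  have hSpos : 0 < ∑ a' : A, Real.exp ((β / α) * Q a') :=
    Finset.sum_pos (fun a _ => Real.exp_pos _) Finset.univ_nonempty
  -- log ratios of πStar
  have hlogStar : ∀ a b : A, Real.log (πStar a) - Real.log (πStar b) = (β/α) * (Q a - Q b) := by
    intro a b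
    rw [hπStar]
    simp only
    rw [Real.log_div (Real.exp_ne_zero _) hSpos.ne', Real.log_div (Real.exp_ne_zero _) hSpos.ne',
        Real.log_exp, Real.log_exp]
    ring
  have hαβ : ∀ a b : A, α * (Real.log (πStar a) - Real.log (πStar b)) = β * (Q a - Q b) := by
    intro a b; rw [hlogStar]; field_simp
  set p : A → A → ℝ := fun a b => sigmoid (β * (Q a - Q b)) with hpdef
  set q : A → A → ℝ := fun a b => sigmoid (α * (Real.log (π a) - Real.log (π b))) with hqdef
  have hp0 : ∀ a b, 0 < p a b := fun a b => sigmoid_pos _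
  have hp1 : ∀ a b, p a b < 1 := fun a b => sigmoid_lt_one _
  have hq0 : ∀ a b, 0 < q a b := fun a b => sigmoid_pos _
  have hq1 : ∀ a b, q a b < 1 := fun a b => sigmoid_lt_one _
  have hpsym : ∀ a b, p b a = 1 - p a b := by
    intro a b
    have h : β * (Q b - Q a) = -(β * (Q a - Q b)) := by ring
    show sigmoid (β * (Q b - Q a)) = 1 - sigmoid (β * (Q a - Q b))
    rw [h, sigmoid_neg]
  have hqsym : ∀ a b, q b a = 1 - q a b := by
    intro a b
    have h : α * (Real.log (π b) - Real.log (π a)) = -(α * (Real.log (π a) - Real.log (π b))) := by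
      ring
    show sigmoid _ = 1 - sigmoid _
    rw [h, sigmoid_neg]
  -- witness pair where q ≠ p
  have hwit : ∃ a b : A, q a b ≠ p a b := by
    by_contra hc
    push_neg at hc
    apply hne
    have hlog : ∀ a b : A, Real.log (π a) - Real.log (π b) = (β/α) * (Q a - Q b) := by
      intro a b
      have h2 : α * (Real.log (π a) - Real.log (π b)) = β * (Q a - Q b) := sigmoid_inj (hc a b)
      field_simp
      linarith [h2]
    obtain ⟨b0⟩ := hne0
    funext a
    have ha : ∀ a : A,
        π a = Real.exp (Real.log (π b0) - (β/α) * Q b0) * Real.exp ((β/α) * Q a) := by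
      intro a
      rw [← Real.exp_add]
      have h3 := hlog a b0
      have e : (β/α) * (Q a - Q b0) = (β/α) * Q a - (β/α) * Q b0 := by ring
      rw [← Real.exp_log (hpos a)]
      congr 1
      linarith [h3, e]
    have hsum2 : Real.exp (Real.log (π b0) - (β/α) * Q b0) *
        (∑ a' : A, Real.exp ((β / α) * Q a')) = 1 := by
      rw [Finset.mul_sum, ← hsum]
      exact Finset.sum_congr rfl (fun a _ => (ha a).symm)
    rw [hπStar]
    simp only
    rw [ha a, eq_div_iff hSpos.ne']
    linear_combination Real.exp ((β / α) * Q a) * hsum2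
  obtain ⟨a0, b0, hwne⟩ := hwit
  -- key sum inequality
  have keyterm : ∀ a b : A,
      p a b * Real.log (q a b) + p b a * Real.log (q b a) ≤
      p a b * Real.log (p a b) + p b a * Real.log (p b a) := by
    intro a b
    rw [hpsym a b, hqsym a b]
    exact gibbs_le (hp0 a b) (hp1 a b) (hq0 a b) (hq1 a b)
  have keyterm_strict :
      p a0 b0 * Real.log (q a0 b0) + p b0 a0 * Real.log (q b0 a0) <
      p a0 b0 * Real.log (p a0 b0) + p b0 a0 * Real.log (p b0 a0) := by
    rw [hpsym a0 b0, hqsym a0 b0]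
    exact gibbs_lt (hp0 a0 b0) (hp1 a0 b0) (hq0 a0 b0) (hq1 a0 b0) hwne
  set F : A → A → ℝ := fun a b => p a b * Real.log (p a b) - p a b * Real.log (q a b)
    with hFdef
  have hFnn : ∀ x : A × A, 0 ≤ F x.1 x.2 + F x.2 x.1 := by
    intro ⟨a, b⟩
    have := keyterm a b
    simp only [hFdef]
    linarith
  have hFpos : 0 < F a0 b0 + F b0 a0 := by
    simp only [hFdef]
    linarith [keyterm_strict]
  have hsumF : 0 < ∑ x : A × A, (F x.1 x.2 + F x.2 x.1) :=
    Finset.sum_pos' (fun x _ => hFnn x) ⟨(a0, b0), Finset.mem_univ _, hFpos⟩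
  have hprod : ∑ x : A × A, (F x.1 x.2 + F x.2 x.1)
      = ∑ a : A, ∑ b : A, (F a b + F b a) := by
    rw [Fintype.sum_prod_type]
  have hswap : ∑ a : A, ∑ b : A, F b a = ∑ a : A, ∑ b : A, F a b := by
    rw [Finset.sum_comm]
  have hdouble : ∑ a : A, ∑ b : A, (F a b + F b a) = 2 * ∑ a : A, ∑ b : A, F a b := by
    simp only [Finset.sum_add_distrib]
    rw [hswap]; ring
  have hpos2 : 0 < ∑ a : A, ∑ b : A, F a b := by
    rw [hprod, hdouble] at hsumF
    linarith
  have hsub : ∑ a : A, ∑ b : A, F a b =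
      (∑ a : A, ∑ b : A, p a b * Real.log (p a b)) -
        ∑ a : A, ∑ b : A, p a b * Real.log (q a b) := by
    simp only [hFdef, Finset.sum_sub_distrib]
  have key : ∑ a : A, ∑ b : A, p a b * Real.log (q a b) <
      ∑ a : A, ∑ b : A, p a b * Real.log (p a b) := by
    rw [hsub] at hpos2; linarith
  have hrw1 : ∀ a b : A, sigmoid (α * (Real.log (πStar a) - Real.log (πStar b))) = p a b := by
    intro a b; rw [hαβ a b]
  unfold prefLoss
  have hrw2 : (∑ a : A, ∑ b : A, sigmoid (β * (Q a - Q b)) *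
      Real.log (sigmoid (α * (Real.log (πStar a) - Real.log (πStar b)))))
      = ∑ a : A, ∑ b : A, p a b * Real.log (p a b) := by
    apply Finset.sum_congr rfl
    intro a _
    apply Finset.sum_congr rfl
    intro b _
    rw [hrw1]
  rw [hrw2]
  have hcR : (0:ℝ) < (Fintype.card A : ℝ) := by exact_mod_cast hcard
  have hcpos : (0:ℝ) < 1 / ((Fintype.card A : ℝ) ^ 2) := by positivity
  have hmul := mul_lt_mul_of_pos_left key hcpos
  show -(1 / ((Fintype.card A : ℝ) ^ 2)) * (∑ a : A, ∑ b : A, p a b * Real.log (p a b)) <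
      -(1 / ((Fintype.card A : ℝ) ^ 2)) * ∑ a : A, ∑ b : A, p a b * Real.log (q a b)
  nlinarith [hmul]
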